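/- For N ≥ 1, K ≥ 2, γ > 0, the minimum ZF-estimator MSE under the equally-divided delay scheme in a K-cell, N-user-per-cell system equals (N/(Kγ))·((K−1)² + 1/(2N−1)); i.e., if MSE_i(Δ) = (T/(Kγ))·((K−1)²/Δ + 1/(2T−Δ)) and Σ_{i=1}^N Δᵢ = T with Δᵢ ∈ (0,T), then (1/N)·Σᵢ MSE_i(Δᵢ) is minimized at Δᵢ = T/N for all i, with minimum value (N/(Kγ))·((K−1)² + 1/(2N−1)). -/

import Mathlib

/-- Minimum ZF-estimator MSE under the equally-divided delay scheme: with per-group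
`MSE_i(Δ) = (T/(Kγ))·((K−1)²/Δ + 1/(2T−Δ))` and group interval lengths
`Δᵢ ∈ (0,T)` summing to `T`, the average `(1/N)·Σᵢ MSE_i(Δᵢ)` is minimized at
`Δᵢ = T/N`, with minimum value `(N/(Kγ))·((K−1)² + 1/(2N−1))`. -/
theorem equally_divided_min_mse (N K : ℕ) (hN : 1 ≤ N) (hK : 2 ≤ K)
    (T γ : ℝ) (hT : 0 < T) (hγ : 0 < γ) :
    ((1 : ℝ) / N *
        ∑ _i : Fin N,
          (T / (K * γ)) * ((K - 1 : ℝ) ^ 2 / (T / N) + 1 / (2 * T - T / N)) =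
      (N / (K * γ)) * ((K - 1 : ℝ) ^ 2 + 1 / (2 * N - 1))) ∧
      ∀ Δ : Fin N → ℝ, (∀ i, Δ i ∈ Set.Ioo 0 T) → ∑ i, Δ i = T →
        (N / (K * γ)) * ((K - 1 : ℝ) ^ 2 + 1 / (2 * N - 1)) ≤
          (1 : ℝ) / N *
            ∑ i, (T / (K * γ)) * ((K - 1 : ℝ) ^ 2 / Δ i + 1 / (2 * T - Δ i)) := by
  have hNpos : (0:ℝ) < N := by exact_mod_cast Nat.lt_of_lt_of_le Nat.zero_lt_one hN
  have hN1 : (1:ℝ) ≤ N := by exact_mod_cast hN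
  have hKpos : (0:ℝ) < K := by positivity
  set a : ℝ := (K - 1 : ℝ) with ha
  set s : ℝ := T / N with hsdef
  have hs : 0 < s := by positivity
  have hsle : s ≤ T := by
    rw [hsdef, div_le_iff₀ hNpos]; nlinarith
  have h2Ts : 0 < 2 * T - s := by linarith
  have h2N1 : (0:ℝ) < 2 * N - 1 := by linarith
  have hNe : (N:ℝ) ≠ 0 := ne_of_gt hNpos
  have hKe : (K:ℝ) ≠ 0 := ne_of_gt hKpos
  have hmin_eq : ((N:ℝ) / (K * γ)) * (a ^ 2 + 1 / (2 * N - 1)) =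
      (1:ℝ) / N * ((T / (K * γ)) * ((N:ℝ) * (a ^ 2 / s + 1 / (2 * T - s)))) := by
    have h2Ts' : 2 * T - s = T * (2 * N - 1) / N := by
      rw [hsdef]; field_simp
    rw [h2Ts', hsdef]
    field_simp
  constructor
  · rw [Finset.sum_const, Finset.card_univ, Fintype.card_fin, nsmul_eq_mul]
    rw [hmin_eq]
    ring
  · intro Δ hΔ hsum
    have key : ∀ i : Fin N,
        a ^ 2 / s + 1 / (2 * T - s) +
          (Δ i - s) * (1 / (2 * T - s) ^ 2 - a ^ 2 / s ^ 2) ≤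
        a ^ 2 / Δ i + 1 / (2 * T - Δ i) := by
      intro i
      obtain ⟨hx0, hxT⟩ := hΔ i
      set x := Δ i
      have h2Tx : 0 < 2 * T - x := by linarith
      have hA : (0:ℝ) ≤ a ^ 2 := sq_nonneg a
      have h1 : 1 / s - (x - s) / s ^ 2 ≤ 1 / x := by
        rw [div_sub_div _ _ (ne_of_gt hs) (by positivity),
          div_le_div_iff₀ (by positivity) hx0]
        nlinarith [sq_nonneg (x - s)]
      have h2 : 1 / (2 * T - s) + (x - s) / (2 * T - s) ^ 2 ≤ 1 / (2 * T - x) := by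
        rw [div_add_div _ _ (ne_of_gt h2Ts) (by positivity),
          div_le_div_iff₀ (by positivity) h2Tx]
        nlinarith [sq_nonneg (x - s)]
      have h1' := mul_le_mul_of_nonneg_left h1 hA
      have e1 : a ^ 2 * (1 / s - (x - s) / s ^ 2) =
          a ^ 2 / s - (x - s) * (a ^ 2 / s ^ 2) := by ring
      have e2 : a ^ 2 * (1 / x) = a ^ 2 / x := by ring
      rw [e1, e2] at h1'
      have : (x - s) * (1 / (2 * T - s) ^ 2 - a ^ 2 / s ^ 2) =
          (x - s) / (2 * T - s) ^ 2 - (x - s) * (a ^ 2 / s ^ 2) := by ring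
      linarith [h1', h2]
    have hzero : ∑ i, (Δ i - s) = 0 := by
      rw [Finset.sum_sub_distrib, hsum, Finset.sum_const, Finset.card_univ,
        Fintype.card_fin, nsmul_eq_mul, hsdef]
      field_simp
      ring
    have hsum2 : (N:ℝ) * (a ^ 2 / s + 1 / (2 * T - s)) ≤
        ∑ i, (a ^ 2 / Δ i + 1 / (2 * T - Δ i)) := by
      have h := Finset.sum_le_sum (fun i (_ : i ∈ Finset.univ) => key i)
      have hL : ∑ i : Fin N, (a ^ 2 / s + 1 / (2 * T - s) +
          (Δ i - s) * (1 / (2 * T - s) ^ 2 - a ^ 2 / s ^ 2)) =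
          (N:ℝ) * (a ^ 2 / s + 1 / (2 * T - s)) := by
        rw [Finset.sum_add_distrib, ← Finset.sum_mul, hzero, zero_mul, add_zero,
          Finset.sum_const, Finset.card_univ, Fintype.card_fin, nsmul_eq_mul]
      rw [hL] at h
      exact h
    rw [hmin_eq]
    have hC : (0:ℝ) < T / (K * γ) := by positivity
    have step : (T / (K * γ)) * ((N:ℝ) * (a ^ 2 / s + 1 / (2 * T - s))) ≤
        (T / (K * γ)) * ∑ i, (a ^ 2 / Δ i + 1 / (2 * T - Δ i)) :=
      mul_le_mul_of_nonneg_left hsum2 (le_of_lt hC)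
    have hmul : ∑ i, (T / (K * γ)) * (a ^ 2 / Δ i + 1 / (2 * T - Δ i)) =
        (T / (K * γ)) * ∑ i, (a ^ 2 / Δ i + 1 / (2 * T - Δ i)) := by
      rw [Finset.mul_sum]
    rw [hmul]
    have h1N : (0:ℝ) ≤ 1 / N := by positivity
    exact mul_le_mul_of_nonneg_left step h1N
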